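/- Let n ≥ 1 and z : Fin n → ℝ be not constant (there exist i, j with z i ≠ z j). Then the map τ ↦ H(softmaxτ(z, τ)) is strictly monotone increasing on (0, ∞): raising the temperature strictly increases the smoothness (Shannon entropy) of the soft label. -/

import Mathlib

open Real Set

/-- Tempered softmax of logits `z` at temperature `τ`. -/
noncomputable def softmaxT {n : ℕ} (z : Fin n → ℝ) (τ : ℝ) (i : Fin n) : ℝ :=
  Real.exp (z i / τ) / ∑ j, Real.exp (z j / τ)

lemma gibbs_strictAntiOn (n : ℕ) (hn : 1 ≤ n) (z : Fin n → ℝ) (hne : ∃ i j, z i ≠ z j) :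
    StrictAntiOn (fun β : ℝ => Real.log (∑ i, Real.exp (β * z i))
      - β * ((∑ i, z i * Real.exp (β * z i)) / (∑ i, Real.exp (β * z i)))) (Set.Ioi 0) := by
  have hnonempty : Nonempty (Fin n) := Fin.pos_iff_nonempty.mp hn
  have hZpos : ∀ β : ℝ, 0 < ∑ i, Real.exp (β * z i) := fun β =>
    Finset.sum_pos (fun i _ => Real.exp_pos _) Finset.univ_nonempty
  -- derivative of each building block
  have hexp : ∀ (β : ℝ) (i : Fin n),
      HasDerivAt (fun β : ℝ => Real.exp (β * z i)) (z i * Real.exp (β * z i)) β := by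
    intro β i
    have h := (hasDerivAt_mul_const (z i)).exp (x := β)
    simpa [mul_comm] using h
  have hZ : ∀ β : ℝ, HasDerivAt (fun β : ℝ => ∑ i, Real.exp (β * z i))
      (∑ i, z i * Real.exp (β * z i)) β := fun β =>
    HasDerivAt.fun_sum (fun i _ => hexp β i)
  have hN : ∀ β : ℝ, HasDerivAt (fun β : ℝ => ∑ i, z i * Real.exp (β * z i))
      (∑ i, z i ^ 2 * Real.exp (β * z i)) β := by
    intro β
    refine HasDerivAt.fun_sum (fun i _ => ?_)
    have h := (hexp β i).const_mul (z i)
    refine h.congr_deriv ?_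
    ring
  -- derivative of g
  have hg : ∀ β : ℝ, HasDerivAt
      (fun β : ℝ => Real.log (∑ i, Real.exp (β * z i))
        - β * ((∑ i, z i * Real.exp (β * z i)) / (∑ i, Real.exp (β * z i))))
      (-(β * (((∑ i, z i ^ 2 * Real.exp (β * z i)) * (∑ i, Real.exp (β * z i))
          - (∑ i, z i * Real.exp (β * z i)) * (∑ i, z i * Real.exp (β * z i)))
          / (∑ i, Real.exp (β * z i)) ^ 2))) β := by
    intro β
    have hlog := (hZ β).log (hZpos β).ne'
    have hdiv := (hN β).div (hZ β) (hZpos β).ne'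
    have hmul := (hasDerivAt_id β).mul hdiv
    have h := hlog.sub hmul
    refine h.congr_deriv ?_
    simp only [Pi.div_apply, id]
    field_simp
    have hcomm : ∀ x, z x * β = β * z x := fun x => mul_comm _ _
    simp only [hcomm]
    ring
  -- positivity of the variance term
  have hvar : ∀ β : ℝ,
      0 < (∑ i, z i ^ 2 * Real.exp (β * z i)) * (∑ i, Real.exp (β * z i))
          - (∑ i, z i * Real.exp (β * z i)) * (∑ i, z i * Real.exp (β * z i)) := by
    intro β
    set Zb := ∑ i, Real.exp (β * z i) with hZdef
    set Nb := ∑ i, z i * Real.exp (β * z i) with hNdef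
    set m := Nb / Zb with hmdef
    have hZb : 0 < Zb := hZpos β
    have hexpand : ∑ i, Real.exp (β * z i) * (z i - m) ^ 2
        = (∑ i, z i ^ 2 * Real.exp (β * z i)) - 2 * m * Nb + m ^ 2 * Zb := by
      have h1 : ∀ i ∈ Finset.univ, Real.exp (β * z i) * (z i - m) ^ 2
          = z i ^ 2 * Real.exp (β * z i) - 2 * m * (z i * Real.exp (β * z i))
            + m ^ 2 * Real.exp (β * z i) := fun i _ => by ring
      rw [Finset.sum_congr rfl h1, Finset.sum_add_distrib, Finset.sum_sub_distrib,
        ← Finset.mul_sum, ← Finset.mul_sum, hNdef, hZdef]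
    have hkey : 0 < ∑ i, Real.exp (β * z i) * (z i - m) ^ 2 := by
      obtain ⟨i, j, hij⟩ := hne
      have hex : ∃ k ∈ Finset.univ (α := Fin n), 0 < Real.exp (β * z k) * (z k - m) ^ 2 := by
        have hsq : ∀ k : Fin n, z k ≠ m → 0 < Real.exp (β * z k) * (z k - m) ^ 2 := by
          intro k hk
          exact mul_pos (Real.exp_pos _)
            (lt_of_le_of_ne (sq_nonneg _) (Ne.symm (pow_ne_zero 2 (sub_ne_zero.mpr hk))))
        rcases ne_or_eq (z i) m with hi | hi
        · exact ⟨i, Finset.mem_univ i, hsq i hi⟩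
        · have hj : z j ≠ m := fun hj => hij (hi.trans hj.symm)
          exact ⟨j, Finset.mem_univ j, hsq j hj⟩
      exact Finset.sum_pos' (fun k _ => by positivity) hex
    have heq : (∑ i, z i ^ 2 * Real.exp (β * z i)) * Zb - Nb * Nb
        = Zb * ∑ i, Real.exp (β * z i) * (z i - m) ^ 2 := by
      rw [hexpand, hmdef]
      field_simp
      have hcomm : ∀ x, z x * β = β * z x := fun x => mul_comm _ _
      simp only [hcomm]
      ring
    rw [heq]
    exact mul_pos hZb hkey
  -- conclude via negative derivative
  refine strictAntiOn_of_deriv_neg (convex_Ioi 0) ?_ ?_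
  · exact fun x _ => (hg x).continuousAt.continuousWithinAt
  · intro x hx
    rw [interior_Ioi] at hx
    rw [(hg x).deriv]
    have hq : 0 < ((∑ i, z i ^ 2 * Real.exp (x * z i)) * (∑ i, Real.exp (x * z i))
        - (∑ i, z i * Real.exp (x * z i)) * (∑ i, z i * Real.exp (x * z i)))
        / (∑ i, Real.exp (x * z i)) ^ 2 := by
      exact div_pos (hvar x) (pow_pos (hZpos x) 2)
    have : 0 < x * _ := mul_pos hx hq
    linarith

lemma entropy_eq (n : ℕ) (hn : 1 ≤ n) (z : Fin n → ℝ) (τ : ℝ) (hτ : 0 < τ) :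
    -∑ i, softmaxT z τ i * Real.log (softmaxT z τ i)
      = Real.log (∑ i, Real.exp (τ⁻¹ * z i))
        - τ⁻¹ * ((∑ i, z i * Real.exp (τ⁻¹ * z i)) / (∑ i, Real.exp (τ⁻¹ * z i))) := by
  have hnonempty : Nonempty (Fin n) := Fin.pos_iff_nonempty.mp hn
  have hrw : ∀ i, τ⁻¹ * z i = z i / τ := fun i => by rw [inv_mul_eq_div]
  simp only [hrw]
  set S := ∑ j, Real.exp (z j / τ) with hSdef
  have hS : 0 < S := Finset.sum_pos (fun i _ => Real.exp_pos _) Finset.univ_nonempty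
  have hterm : ∀ i, softmaxT z τ i * Real.log (softmaxT z τ i)
      = (z i * Real.exp (z i / τ)) / S * τ⁻¹ - Real.exp (z i / τ) / S * Real.log S := by
    intro i
    rw [softmaxT, Real.log_div (Real.exp_ne_zero _) hS.ne', Real.log_exp, ← hSdef]
    field_simp
  rw [Finset.sum_congr rfl (fun i _ => hterm i), Finset.sum_sub_distrib]
  have h1 : (∑ i, Real.exp (z i / τ) / S * Real.log S) = Real.log S := by
    rw [← Finset.sum_mul, ← Finset.sum_div, ← hSdef, div_self hS.ne', one_mul]
  have h2 : (∑ i, z i * Real.exp (z i / τ) / S * τ⁻¹)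
      = (∑ i, z i * Real.exp (z i / τ)) / S * τ⁻¹ := by
    rw [← Finset.sum_mul, ← Finset.sum_div]
  rw [h1, h2]
  ring

theorem entropy_of_softmaxT_strictMonoOn
    (n : ℕ) (hn : 1 ≤ n) (z : Fin n → ℝ) (hne : ∃ i j, z i ≠ z j) :
    StrictMonoOn
      (fun τ : ℝ => -∑ i, softmaxT z τ i * Real.log (softmaxT z τ i))
      (Set.Ioi 0) := by
  intro a ha b hb hab
  rw [Set.mem_Ioi] at ha hb
  have hainv : (b : ℝ)⁻¹ ∈ Set.Ioi (0:ℝ) := Set.mem_Ioi.mpr (by positivity)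
  have hbinv : (a : ℝ)⁻¹ ∈ Set.Ioi (0:ℝ) := Set.mem_Ioi.mpr (by positivity)
  have hlt : b⁻¹ < a⁻¹ := by
    rw [inv_lt_inv₀ hb ha]
    exact hab
  have h := gibbs_strictAntiOn n hn z hne hainv hbinv hlt
  simpa only [entropy_eq n hn z a ha, entropy_eq n hn z b hb] using h
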